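/- Let H be a real Hilbert space and v : (0, ∞) → H a strongly measurable function with ‖v(t)‖ ≤ C·t for all t > 0 (for some constant C ≥ 0) and ∫₀^∞ t^{−3/2} ‖v(t)‖ dt < ∞. For λ > 0 define u(λ) := λ · ∫₀^∞ e^{−λt} v(t) dt. Then for every δ ∈ (0, 1): ∑_{k=0}^∞ δ^{k/2} ‖u(δ^k)‖ ≤ ((3/(2e))^{3/2} + √π / (2(1 − δ))) · ∫₀^∞ t^{−3/2} ‖v(t)‖ dt. -/

import Mathlib

open MeasureTheory Set

noncomputable def hh (x : ℝ) : ℝ := Real.exp (-x) * x ^ ((1:ℝ)/2)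

lemma hh_nonneg {x : ℝ} (hx : 0 ≤ x) : 0 ≤ hh x := by
  unfold hh; positivity

lemma hh_anti {a b : ℝ} (ha : 1/2 ≤ a) (hab : a ≤ b) : hh b ≤ hh a := by
  have ha0 : 0 < a := by linarith
  have hb0 : 0 < b := lt_of_lt_of_le ha0 hab
  have hba : 0 < b / a := by positivity
  have hlog : Real.log (b/a) ≤ 2*(b-a) := by
    have h1 := Real.log_le_sub_one_of_pos hba
    have h2 : b/a - 1 = (b-a)/a := by field_simp
    have h3 : (b-a)/a ≤ 2*(b-a) := by
      rw [div_le_iff₀ ha0]; nlinarith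
    linarith
  have hdiv : b / a ≤ Real.exp (2*(b-a)) := by
    calc b/a = Real.exp (Real.log (b/a)) := (Real.exp_log hba).symm
    _ ≤ Real.exp (2*(b-a)) := Real.exp_le_exp.2 hlog
  have hroot : (b/a) ^ ((1:ℝ)/2) ≤ Real.exp (b-a) := by
    calc (b/a) ^ ((1:ℝ)/2) ≤ (Real.exp (2*(b-a))) ^ ((1:ℝ)/2) :=
          Real.rpow_le_rpow (le_of_lt hba) hdiv (by norm_num)
    _ = Real.exp (b-a) := by
          rw [Real.rpow_def_of_pos (Real.exp_pos _), Real.log_exp]; ring_nf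
  have hsplit : b ^ ((1:ℝ)/2) = a ^ ((1:ℝ)/2) * (b/a) ^ ((1:ℝ)/2) := by
    rw [← Real.mul_rpow (le_of_lt ha0) (le_of_lt hba)]
    congr 1; field_simp
  unfold hh
  rw [hsplit]
  calc Real.exp (-b) * (a ^ ((1:ℝ)/2) * (b/a) ^ ((1:ℝ)/2))
      ≤ Real.exp (-b) * (a ^ ((1:ℝ)/2) * Real.exp (b-a)) := by
        have := Real.exp_pos (-b)
        have : (0:ℝ) ≤ a ^ ((1:ℝ)/2) := by positivity
        gcongr
    _ = Real.exp (-a) * a ^ ((1:ℝ)/2) := by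
        rw [show Real.exp (-b) * (a ^ ((1:ℝ)/2) * Real.exp (b-a))
              = (Real.exp (-b) * Real.exp (b-a)) * a ^ ((1:ℝ)/2) by ring,
            ← Real.exp_add]
        ring_nf

lemma hh_mono {a b : ℝ} (ha : 0 < a) (hab : a ≤ b) (hb : b ≤ 1/2) : hh a ≤ hh b := by
  have hb0 : 0 < b := lt_of_lt_of_le ha hab
  have hba : 0 < a / b := by positivity
  have hlog : Real.log (a/b) ≤ 2*(a-b) := by
    have h1 := Real.log_le_sub_one_of_pos hba
    have h2 : a/b - 1 = (a-b)/b := by field_simp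
    have h3 : (a-b)/b ≤ 2*(a-b) := by
      rw [div_le_iff₀ hb0]
      nlinarith [mul_nonneg (sub_nonneg.2 hab) (by linarith : (0:ℝ) ≤ 1 - 2*b)]
    linarith
  have hdiv : a / b ≤ Real.exp (2*(a-b)) := by
    calc a/b = Real.exp (Real.log (a/b)) := (Real.exp_log hba).symm
    _ ≤ Real.exp (2*(a-b)) := Real.exp_le_exp.2 hlog
  have hroot : (a/b) ^ ((1:ℝ)/2) ≤ Real.exp (a-b) := by
    calc (a/b) ^ ((1:ℝ)/2) ≤ (Real.exp (2*(a-b))) ^ ((1:ℝ)/2) :=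
          Real.rpow_le_rpow (le_of_lt hba) hdiv (by norm_num)
    _ = Real.exp (a-b) := by
          rw [Real.rpow_def_of_pos (Real.exp_pos _), Real.log_exp]; ring_nf
  have hsplit : a ^ ((1:ℝ)/2) = b ^ ((1:ℝ)/2) * (a/b) ^ ((1:ℝ)/2) := by
    rw [← Real.mul_rpow (le_of_lt hb0) (le_of_lt hba)]
    congr 1; field_simp
  unfold hh
  rw [hsplit]
  calc Real.exp (-a) * (b ^ ((1:ℝ)/2) * (a/b) ^ ((1:ℝ)/2))
      ≤ Real.exp (-a) * (b ^ ((1:ℝ)/2) * Real.exp (a-b)) := by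
        have : (0:ℝ) ≤ b ^ ((1:ℝ)/2) := by positivity
        gcongr
    _ = Real.exp (-b) * b ^ ((1:ℝ)/2) := by
        rw [show Real.exp (-a) * (b ^ ((1:ℝ)/2) * Real.exp (a-b))
              = (Real.exp (-a) * Real.exp (a-b)) * b ^ ((1:ℝ)/2) by ring,
            ← Real.exp_add]
        ring_nf

lemma hh_eq : hh = fun x : ℝ => Real.exp (-x) * x ^ ((3:ℝ)/2 - 1) := by
  funext x; rw [hh]; norm_num

lemma hh_integrableOn : IntegrableOn hh (Ioi 0) := by
  rw [hh_eq]; exact Real.GammaIntegral_convergent (by norm_num)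

lemma hh_integral : ∫ x in Ioi (0:ℝ), hh x = Real.sqrt Real.pi / 2 := by
  have h1 := Real.Gamma_eq_integral (s := 3/2) (by norm_num)
  have h2 : Real.Gamma (3/2) = Real.sqrt Real.pi / 2 := by
    have : (3:ℝ)/2 = 1/2 + 1 := by norm_num
    rw [this, Real.Gamma_add_one (by norm_num), Real.Gamma_one_half_eq]
    ring
  rw [← h2, h1, hh_eq]

lemma Ioc_int {p q : ℝ} (hp : 0 < p) : IntegrableOn hh (Ioc p q) :=
  hh_integrableOn.mono_set (fun y hy => lt_trans hp hy.1)

lemma int_lb {p q : ℝ} (hp : 0 < p) (hpq : p ≤ q) {c : ℝ}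
    (hc : ∀ y, p < y → y ≤ q → c ≤ hh y) :
    c * (q - p) ≤ ∫ y in Ioc p q, hh y := by
  have := setIntegral_ge_of_const_le (μ := volume) (f := hh) (c := c)
    measurableSet_Ioc (by simp [Real.volume_Ioc]) (fun y hy => hc y hy.1 hy.2) (Ioc_int hp)
  rwa [Real.volume_real_Ioc_of_le hpq, smul_eq_mul, mul_comm] at this

lemma key {δ : ℝ} (hδ0 : 0 < δ) (hδ1 : δ < 1) {t : ℝ} (ht : 0 < t) (N : ℕ) :
    ∑ k ∈ Finset.range N, (δ^k * t) ^ ((3:ℝ)/2) * Real.exp (-(δ^k * t))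
      ≤ Real.sqrt Real.pi / (2*(1-δ)) + hh (1/2) / 2 := by
  have h1δ : 0 < 1 - δ := by linarith
  -- x sequence
  set x : ℕ → ℝ := fun k => δ^k * t with hx
  have xpos : ∀ k, 0 < x k := fun k => by positivity
  have xstep : ∀ k, x (k+1) = δ * x k := fun k => by simp [hx, pow_succ]; ring
  have xdec : ∀ {j k : ℕ}, j ≤ k → x k ≤ x j := by
    intro j k hjk
    have := pow_le_pow_of_le_one (le_of_lt hδ0) (le_of_lt hδ1) hjk
    exact mul_le_mul_of_nonneg_right this (le_of_lt ht)
  -- the split index m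
  have hex : ∃ n : ℕ, δ^n < (1/2)/t := exists_pow_lt_of_lt_one (by positivity) hδ1
  set m := Nat.find hex with hm
  have hxm : x m < 1/2 := by
    have h := Nat.find_spec hex
    have := (lt_div_iff₀ ht).1 h
    rw [hx]; dsimp only; rw [← hm] at this; linarith
  have hbig : ∀ k, k < m → 1/2 ≤ x k := by
    intro k hk
    have h := Nat.find_min hex hk
    rw [not_lt] at h
    have := (div_le_iff₀ ht).1 h
    rw [hx]; dsimp only
    calc (1:ℝ)/2 ≤ δ ^ k * t := this
    _ = _ := rfl
  -- the interval endpoints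
  set ρ : ℕ → ℝ := fun k => if k < m then x k else if k = m then 1/2 else x (k-1) with hρ
  have ρpos : ∀ k, 0 < ρ k := by
    intro k; simp only [hρ]
    split_ifs <;> first | exact xpos _ | norm_num
  have ρanti : ∀ k, ρ (k+1) ≤ ρ k := by
    intro k; simp only [hρ, Nat.add_sub_cancel]
    split_ifs <;>
      first
        | omega
        | exact xdec (by omega)
        | exact hbig _ (by omega)
        | exact le_trans (xdec (by omega)) (le_of_lt hxm)
        | exact le_rfl
  have ρmono : ∀ {i j : ℕ}, i ≤ j → ρ j ≤ ρ i := fun {i j} h =>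
    antitone_nat_of_succ_le ρanti h
  -- the error terms
  set E : ℕ → ℝ := fun k =>
      (if k+1 = m then (1/2 - x m) * hh (x (m-1)) else 0)
      + (if k = m then (max 0 ((2-δ) * x m - 1/2)) * hh (x m) else 0) with hE
  have h₁ : (0:ℝ) ≤ (1/2 - x m) * hh (x (m-1)) :=
    mul_nonneg (by linarith) (hh_nonneg (xpos _).le)
  have h₂ : (0:ℝ) ≤ max 0 ((2-δ)*x m - 1/2) * hh (x m) :=
    mul_nonneg (le_max_left _ _) (hh_nonneg (xpos _).le)
  have Enonneg : ∀ k, 0 ≤ E k := by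
    intro k; simp only [hE]
    split_ifs <;> linarith
  -- per-term estimate
  have per : ∀ k, (1-δ) * (x k * hh (x k)) ≤ (∫ y in Ioc (ρ (k+1)) (ρ k), hh y) + E k := by
    intro k
    rcases lt_trichotomy (k+1) m with h1|h1|h1
    · have e1 : ρ k = x k := by simp only [hρ]; rw [if_pos (by omega)]
      have e2 : ρ (k+1) = x (k+1) := by simp only [hρ]; rw [if_pos h1]
      have hc : ∀ y, x (k+1) < y → y ≤ x k → hh (x k) ≤ hh y := fun y hy1 hy2 =>
        hh_anti (le_trans (hbig (k+1) h1) hy1.le) hy2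
      have lb := int_lb (xpos (k+1)) (xdec (Nat.le_succ k)) hc
      have egap : x k - x (k+1) = (1-δ) * x k := by rw [xstep]; ring
      rw [e1, e2]
      calc (1-δ) * (x k * hh (x k)) = hh (x k) * (x k - x (k+1)) := by rw [egap]; ring
      _ ≤ ∫ y in Ioc (x (k+1)) (x k), hh y := lb
      _ ≤ _ + E k := le_add_of_nonneg_right (Enonneg k)
    · have hkm : k < m := by omega
      have e1 : ρ k = x k := by simp only [hρ]; rw [if_pos hkm]
      have e2 : ρ (k+1) = 1/2 := by simp only [hρ]; rw [if_neg (by omega), if_pos h1]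
      have hxk : 1/2 ≤ x k := hbig k hkm
      have hc : ∀ y, (1/2:ℝ) < y → y ≤ x k → hh (x k) ≤ hh y := fun y hy1 hy2 =>
        hh_anti hy1.le hy2
      have lb := int_lb (by norm_num : (0:ℝ) < 1/2) hxk hc
      have em1 : m - 1 = k := by omega
      have exm : x m = δ * x k := by rw [← h1, xstep]
      have eE : E k = (1/2 - δ * x k) * hh (x k) := by
        simp only [hE]; rw [if_pos h1, if_neg (by omega), em1, exm, add_zero]
      rw [e1, e2, eE]
      have expand : (1-δ) * (x k * hh (x k))
          = hh (x k) * (x k - 1/2) + (1/2 - δ * x k) * hh (x k) := by ring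
      rw [expand]
      exact add_le_add_left lb _
    · rcases eq_or_lt_of_le (by omega : m ≤ k) with h2|h2
      · have e1 : ρ k = 1/2 := by simp only [hρ]; rw [if_neg (by omega), if_pos (by omega)]
        have e2 : ρ (k+1) = x k := by
          simp only [hρ, Nat.add_sub_cancel]; rw [if_neg (by omega), if_neg (by omega)]
        have hxk : x k < 1/2 := by rw [← h2]; exact hxm
        have hc : ∀ y, x k < y → y ≤ (1/2:ℝ) → hh (x k) ≤ hh y := fun y hy1 hy2 =>
          hh_mono (xpos k) hy1.le hy2
        have lb := int_lb (xpos k) hxk.le hc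
        have eE : E k = max 0 ((2-δ)*x k - 1/2) * hh (x k) := by
          simp only [hE]; rw [if_neg (by omega), if_pos (by omega), ← h2, zero_add]
        rw [e1, e2, eE]
        have hmax : ((2-δ)*x k - 1/2) ≤ max 0 ((2-δ)*x k - 1/2) := le_max_right _ _
        have hfac : (1-δ) * x k ≤ (1/2 - x k) + max 0 ((2-δ)*x k - 1/2) := by linarith
        calc (1-δ)*(x k * hh (x k)) = ((1-δ) * x k) * hh (x k) := by ring
        _ ≤ ((1/2 - x k) + max 0 ((2-δ)*x k - 1/2)) * hh (x k) :=
            mul_le_mul_of_nonneg_right hfac (hh_nonneg (xpos k).le)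
        _ = hh (x k) * (1/2 - x k) + max 0 ((2-δ)*x k - 1/2) * hh (x k) := by ring
        _ ≤ _ := add_le_add_left lb _
      · have e1 : ρ k = x (k-1) := by
          simp only [hρ]; rw [if_neg (by omega), if_neg (by omega)]
        have e2 : ρ (k+1) = x k := by
          simp only [hρ, Nat.add_sub_cancel]; rw [if_neg (by omega), if_neg (by omega)]
        have hk1 : x (k-1) ≤ 1/2 := le_trans (xdec (by omega : m ≤ k-1)) hxm.le
        have hkk : x k ≤ x (k-1) := xdec (by omega)
        have hc : ∀ y, x k < y → y ≤ x (k-1) → hh (x k) ≤ hh y := fun y hy1 hy2 =>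
          hh_mono (xpos k) hy1.le (le_trans hy2 hk1)
        have lb := int_lb (xpos k) hkk hc
        have hstep : x k = δ * x (k-1) := by
          rw [← xstep]; congr 1; omega
        have h3 : (1-δ)*x k ≤ (1-δ)*x (k-1) := mul_le_mul_of_nonneg_left hkk h1δ.le
        have hgap : (1-δ) * x k ≤ x (k-1) - x k := by
          have h4 : (1-δ)*x (k-1) = x (k-1) - x k := by rw [hstep]; ring
          linarith
        rw [e1, e2]
        calc (1-δ)*(x k * hh (x k)) = ((1-δ)*x k) * hh (x k) := by ring
        _ ≤ (x (k-1) - x k) * hh (x k) :=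
            mul_le_mul_of_nonneg_right hgap (hh_nonneg (xpos k).le)
        _ = hh (x k) * (x (k-1) - x k) := by ring
        _ ≤ ∫ y in Ioc (x k) (x (k-1)), hh y := lb
        _ ≤ _ + E k := le_add_of_nonneg_right (Enonneg k)
  -- sum of the integrals telescopes
  have sumint : ∀ n : ℕ, ∑ k ∈ Finset.range n, (∫ y in Ioc (ρ (k+1)) (ρ k), hh y)
      = ∫ y in Ioc (ρ n) (ρ 0), hh y := by
    intro n; induction n with
    | zero => simp
    | succ n ih =>
      rw [Finset.sum_range_succ, ih, add_comm]
      rw [← setIntegral_union (Ioc_disjoint_Ioc_of_le le_rfl) measurableSet_Ioc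
            (Ioc_int (ρpos _)) (Ioc_int (ρpos _)),
          Ioc_union_Ioc_eq_Ioc (ρanti n) (ρmono (Nat.zero_le n))]
  have sumle : ∑ k ∈ Finset.range N, (∫ y in Ioc (ρ (k+1)) (ρ k), hh y)
      ≤ Real.sqrt Real.pi / 2 := by
    rw [sumint N, ← hh_integral]
    refine setIntegral_mono_set hh_integrableOn ?_ ?_
    · exact (ae_restrict_iff' measurableSet_Ioi).2 (ae_of_all _ fun y hy => hh_nonneg hy.le)
    · refine HasSubset.Subset.eventuallyLE (fun y hy => lt_trans (ρpos N) hy.1)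
  -- sum of the error terms
  have hhalf : (0:ℝ) ≤ hh (1/2) := hh_nonneg (by norm_num)
  have sumE : ∑ k ∈ Finset.range N, E k ≤ (1-δ) * hh (1/2) / 2 := by
    simp only [hE]
    rw [Finset.sum_add_distrib]
    have hY : ∑ k ∈ Finset.range N,
        (if k = m then (max 0 ((2-δ) * x m - 1/2)) * hh (x m) else 0)
        = if m ∈ Finset.range N then (max 0 ((2-δ)*x m - 1/2)) * hh (x m) else 0 :=
      Finset.sum_ite_eq' _ _ _
    have hYle : (if m ∈ Finset.range N then (max 0 ((2-δ)*x m - 1/2)) * hh (x m) else 0)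
        ≤ (max 0 ((2-δ)*x m - 1/2)) * hh (x m) := by
      split_ifs <;> first | exact le_rfl | exact h₂
    rcases Nat.eq_zero_or_pos m with hm0 | hm1
    · have hX : ∀ k ∈ Finset.range N,
          (if k+1 = m then (1/2 - x m) * hh (x (m-1)) else 0) = 0 := fun k _ =>
        if_neg (by omega)
      rw [Finset.sum_congr rfl hX, Finset.sum_const_zero, zero_add, hY]
      have hhxm : hh (x m) ≤ hh (1/2) := hh_mono (xpos m) hxm.le le_rfl
      have hmax2 : max 0 ((2-δ)*x m - 1/2) ≤ (1-δ)/2 := by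
        apply max_le
        · linarith
        · nlinarith [xpos m, hxm]
      have hbound : (max 0 ((2-δ)*x m - 1/2)) * hh (x m) ≤ (1-δ) * hh (1/2) / 2 := by
        calc (max 0 ((2-δ)*x m - 1/2)) * hh (x m) ≤ ((1-δ)/2) * hh (1/2) :=
          mul_le_mul hmax2 hhxm (hh_nonneg (xpos m).le) (by linarith)
        _ = (1-δ)*hh (1/2)/2 := by ring
      exact le_trans hYle hbound
    · have hab : x m = δ * x (m-1) := by rw [← xstep]; congr 1; omega
      have hb : 1/2 ≤ x (m-1) := hbig (m-1) (by omega)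
      have ha2 : δ/2 ≤ x m := by rw [hab]; nlinarith
      have hha : hh (x m) ≤ hh (1/2) := hh_mono (xpos m) hxm.le le_rfl
      have hhb : hh (x (m-1)) ≤ hh (1/2) := hh_anti le_rfl hb
      have hX : ∑ k ∈ Finset.range N,
          (if k+1 = m then (1/2 - x m) * hh (x (m-1)) else 0)
          = if m-1 ∈ Finset.range N then (1/2 - x m) * hh (x (m-1)) else 0 := by
        have hcond : ∀ k : ℕ, (if k+1 = m then (1/2 - x m) * hh (x (m-1)) else 0)
            = (if k = m-1 then (1/2 - x m) * hh (x (m-1)) else 0) := by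
          intro k; by_cases h : k+1 = m
          · rw [if_pos h, if_pos (by omega)]
          · rw [if_neg h, if_neg (by omega)]
        rw [Finset.sum_congr rfl (fun k _ => hcond k)]
        exact Finset.sum_ite_eq' _ _ _
      have hXle : (if m-1 ∈ Finset.range N then (1/2 - x m) * hh (x (m-1)) else 0)
          ≤ (1/2 - x m) * hh (x (m-1)) := by
        split_ifs <;> first | exact le_rfl | exact h₁
      rw [hX, hY]
      have hfin : (1/2 - x m)*hh (x (m-1)) + (max 0 ((2-δ)*x m - 1/2))*hh (x m)
          ≤ (1-δ)*hh (1/2)/2 := by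
        rcases le_or_gt ((2-δ)*x m) (1/2) with hz | hz
        · rw [max_eq_left (by linarith)]
          simp only [zero_mul, add_zero]
          have hca : 1/2 - x m ≤ (1-δ)/2 := by linarith
          calc (1/2 - x m)*hh (x (m-1)) ≤ ((1-δ)/2) * hh (1/2) :=
            mul_le_mul hca hhb (hh_nonneg (xpos _).le) (by linarith)
          _ = (1-δ)*hh (1/2)/2 := by ring
        · rw [max_eq_right (by linarith)]
          calc (1/2 - x m)*hh (x (m-1)) + ((2-δ)*x m - 1/2)*hh (x m)
              ≤ (1/2 - x m)*hh (1/2) + ((2-δ)*x m - 1/2)*hh (1/2) :=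
                add_le_add (mul_le_mul_of_nonneg_left hhb (by linarith))
                  (mul_le_mul_of_nonneg_left hha (by linarith))
          _ = ((1-δ)*x m) * hh (1/2) := by ring
          _ ≤ ((1-δ)*(1/2)) * hh (1/2) := by
                apply mul_le_mul_of_nonneg_right _ hhalf
                apply mul_le_mul_of_nonneg_left hxm.le h1δ.le
          _ = (1-δ)*hh (1/2)/2 := by ring
      linarith
  -- assemble
  have main : (1-δ) * ∑ k ∈ Finset.range N, (x k * hh (x k))
      ≤ Real.sqrt Real.pi / 2 + (1-δ)*hh (1/2)/2 := by
    rw [Finset.mul_sum]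
    calc ∑ k ∈ Finset.range N, (1-δ)*(x k * hh (x k))
        ≤ ∑ k ∈ Finset.range N, ((∫ y in Ioc (ρ (k+1)) (ρ k), hh y) + E k) :=
          Finset.sum_le_sum (fun k _ => per k)
    _ = (∑ k ∈ Finset.range N, ∫ y in Ioc (ρ (k+1)) (ρ k), hh y)
        + ∑ k ∈ Finset.range N, E k := Finset.sum_add_distrib
    _ ≤ Real.sqrt Real.pi / 2 + (1-δ)*hh (1/2)/2 := add_le_add sumle sumE
  have grew : ∀ k ∈ Finset.range N,
      (δ^k * t)^((3:ℝ)/2) * Real.exp (-(δ^k*t)) = x k * hh (x k) := by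
    intro k _
    have hy : (0:ℝ) < δ^k * t := by positivity
    show (δ^k * t)^((3:ℝ)/2) * Real.exp (-(δ^k*t))
        = (δ^k * t) * (Real.exp (-(δ^k * t)) * (δ^k * t) ^ ((1:ℝ)/2))
    rw [show (3:ℝ)/2 = 1 + 1/2 by norm_num, Real.rpow_add hy, Real.rpow_one]; ring
  rw [Finset.sum_congr rfl grew]
  rw [← le_div_iff₀' h1δ] at main
  calc ∑ k ∈ Finset.range N, x k * hh (x k)
      ≤ (Real.sqrt Real.pi / 2 + (1-δ)*hh (1/2)/2) / (1-δ) := main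
  _ = Real.sqrt Real.pi / (2*(1-δ)) + hh (1/2) / 2 := by field_simp

lemma g_bdd {y : ℝ} (hy : 0 ≤ y) : y ^ ((3:ℝ)/2) * Real.exp (-y) ≤ 5 := by
  have hexp1 : Real.exp (-y) ≤ 1 := Real.exp_le_one_iff.2 (by linarith)
  have hexppos := Real.exp_pos y
  have hprod : Real.exp (-y) * Real.exp y = 1 := by
    rw [← Real.exp_add]; simp
  have hsq : y^2 ≤ 4 * Real.exp y := by
    have h1 : 1 + y/2 ≤ Real.exp (y/2) := by
      have := Real.add_one_le_exp (y/2); linarith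
    have h2 : Real.exp (y/2) * Real.exp (y/2) = Real.exp y := by
      rw [← Real.exp_add]; ring_nf
    nlinarith [sq_nonneg (y/2), Real.exp_pos (y/2)]
  have hy32 : y ^ ((3:ℝ)/2) ≤ 1 + y^2 := by
    rcases le_or_gt y 1 with h|h
    · have := Real.rpow_le_one hy h (by norm_num : (0:ℝ) ≤ 3/2)
      nlinarith [sq_nonneg y]
    · have h1 : y ^ ((3:ℝ)/2) ≤ y ^ ((2:ℝ)) :=
        Real.rpow_le_rpow_of_exponent_le h.le (by norm_num)
      rw [Real.rpow_two] at h1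
      nlinarith
  have hrnn : (0:ℝ) ≤ y ^ ((3:ℝ)/2) := Real.rpow_nonneg hy _
  nlinarith [mul_le_mul_of_nonneg_right hy32 (le_of_lt (Real.exp_pos (-y)))]

lemma const_le : hh (1/2) / 2 ≤ (3 / (2 * Real.exp 1)) ^ ((3:ℝ)/2) := by
  have h2pos : (0:ℝ) < (2:ℝ) ^ ((1:ℝ)/2) := Real.rpow_pos_of_pos (by norm_num) _
  have e1 : Real.exp 1 < 3 := by
    have := Real.exp_one_lt_d9; linarith
  have h3 : (3:ℝ) ≤ (3:ℝ) ^ ((3:ℝ)/2) := by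
    calc (3:ℝ) = 3 ^ ((1:ℝ)) := (Real.rpow_one 3).symm
    _ ≤ 3 ^ ((3:ℝ)/2) := Real.rpow_le_rpow_of_exponent_le (by norm_num) (by norm_num)
  have key3 : (3:ℝ) ^ ((3:ℝ)/2) = (3/2) ^ ((3:ℝ)/2) * 2 ^ ((3:ℝ)/2) := by
    rw [← Real.mul_rpow (by norm_num) (by norm_num)]; norm_num
  have h2 : (2:ℝ) ^ ((3:ℝ)/2) = 2 * 2 ^ ((1:ℝ)/2) := by
    rw [show (3:ℝ)/2 = 1 + 1/2 by norm_num, Real.rpow_add (by norm_num), Real.rpow_one]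
  have chain : Real.exp 1 ≤ (3/2) ^ ((3:ℝ)/2) * (2 * 2 ^ ((1:ℝ)/2)) := by
    rw [← h2, ← key3]; linarith
  have hs : ((1:ℝ)/2) ^ ((1:ℝ)/2) = ((2:ℝ) ^ ((1:ℝ)/2))⁻¹ := by
    rw [show (1:ℝ)/2 = 2⁻¹ by norm_num, Real.inv_rpow (by norm_num)]
  have hRHS : (3 / (2 * Real.exp 1)) ^ ((3:ℝ)/2)
      = (3/2) ^ ((3:ℝ)/2) * (Real.exp (3/2))⁻¹ := by
    rw [show (3:ℝ) / (2 * Real.exp 1) = (3/2) * (Real.exp 1)⁻¹ by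
          field_simp,
        Real.mul_rpow (by norm_num) (by positivity),
        Real.inv_rpow (Real.exp_pos 1).le, Real.exp_one_rpow]
  have hLHS : hh (1/2) = Real.exp (-(1/2)) * ((2:ℝ) ^ ((1:ℝ)/2))⁻¹ := by
    rw [hh, hs]
  rw [hLHS, hRHS, ← div_eq_mul_inv ((3/2:ℝ) ^ ((3:ℝ)/2)), le_div_iff₀ (Real.exp_pos _)]
  have emul : Real.exp (-(1/2)) * Real.exp (3/2) = Real.exp 1 := by
    rw [← Real.exp_add]; norm_num
  rw [show Real.exp (-(1/2)) * ((2:ℝ) ^ ((1:ℝ)/2))⁻¹ / 2 * Real.exp (3/2)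
      = (Real.exp (-(1/2)) * Real.exp (3/2)) * (((2:ℝ) ^ ((1:ℝ)/2))⁻¹ / 2) by ring,
    emul]
  have hinv : (2:ℝ) ^ ((1:ℝ)/2) * ((2:ℝ) ^ ((1:ℝ)/2))⁻¹ = 1 := mul_inv_cancel₀ (ne_of_gt h2pos)
  have hcpos : (0:ℝ) < (3/2:ℝ) ^ ((3:ℝ)/2) := Real.rpow_pos_of_pos (by norm_num) _
  nlinarith [chain, h2pos, hinv, hcpos, Real.exp_pos 1, inv_pos.2 h2pos]

theorem stmt_14
    {H : Type*} [NormedAddCommGroup H] [InnerProductSpace ℝ H] [CompleteSpace H]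
    (C : ℝ) (hC : 0 ≤ C) (v : ℝ → H)
    (hmeas : AEStronglyMeasurable v (volume.restrict (Set.Ioi (0 : ℝ))))
    (hbdd : ∀ t : ℝ, 0 < t → ‖v t‖ ≤ C * t)
    (hint : IntegrableOn (fun t : ℝ => t ^ (-(3 : ℝ) / 2) * ‖v t‖) (Set.Ioi 0))
    (u : ℝ → H)
    (hu : ∀ l : ℝ, 0 < l → u l = l • ∫ t in Set.Ioi (0 : ℝ), Real.exp (-l * t) • v t) :
    ∀ δ : ℝ, δ ∈ Set.Ioo (0 : ℝ) 1 →
      Summable (fun k : ℕ => δ ^ ((k : ℝ) / 2) * ‖u (δ ^ k)‖) ∧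
      ∑' k : ℕ, δ ^ ((k : ℝ) / 2) * ‖u (δ ^ k)‖ ≤
        ((3 / (2 * Real.exp 1)) ^ ((3 : ℝ) / 2) + Real.sqrt Real.pi / (2 * (1 - δ))) *
          ∫ t in Set.Ioi (0 : ℝ), t ^ (-(3 : ℝ) / 2) * ‖v t‖ := by
  intro δ hδ
  obtain ⟨hδ0, hδ1⟩ := hδ
  have h1δ : (0:ℝ) < 1 - δ := by linarith
  have hGnn : ∀ t ∈ Ioi (0:ℝ), 0 ≤ t ^ (-(3:ℝ)/2) * ‖v t‖ := fun t ht =>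
    mul_nonneg (Real.rpow_nonneg (le_of_lt ht) _) (norm_nonneg _)
  have hInn : 0 ≤ ∫ t in Ioi (0:ℝ), t ^ (-(3:ℝ)/2) * ‖v t‖ :=
    setIntegral_nonneg measurableSet_Ioi hGnn
  set A' : ℝ := Real.sqrt Real.pi / (2*(1-δ)) + hh (1/2) / 2 with hA'
  -- measurability of the weight
  have hWcont : ∀ k : ℕ, Continuous (fun t : ℝ => (δ^k * t) ^ ((3:ℝ)/2) * Real.exp (-(δ^k * t))) := by
    intro k
    exact ((Real.continuous_rpow_const (by norm_num)).comp
        (continuous_const.mul continuous_id)).mul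
      (Real.continuous_exp.comp (continuous_const.mul continuous_id).neg)
  -- integrability of the products
  have hFint : ∀ k : ℕ, IntegrableOn
      (fun t => (δ^k * t) ^ ((3:ℝ)/2) * Real.exp (-(δ^k * t)) * (t ^ (-(3:ℝ)/2) * ‖v t‖))
      (Ioi 0) := by
    intro k
    refine Integrable.bdd_mul (c := 5) hint ((hWcont k).aestronglyMeasurable) ?_
    refine (ae_restrict_iff' measurableSet_Ioi).2 (ae_of_all _ fun t ht => ?_)
    have h1 : (0:ℝ) < δ^k * t := by
      have : (0:ℝ) < t := ht
      positivity
    rw [Real.norm_eq_abs,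
      abs_of_nonneg (mul_nonneg (Real.rpow_nonneg h1.le _) (Real.exp_pos _).le)]
    exact g_bdd h1.le
  -- per-term bound
  have term_le : ∀ k : ℕ, δ ^ ((k:ℝ)/2) * ‖u (δ^k)‖
      ≤ ∫ t in Ioi (0:ℝ),
          (δ^k * t) ^ ((3:ℝ)/2) * Real.exp (-(δ^k * t)) * (t ^ (-(3:ℝ)/2) * ‖v t‖) := by
    intro k
    have hl : (0:ℝ) < δ^k := pow_pos hδ0 k
    rw [hu _ hl, norm_smul, Real.norm_eq_abs, abs_of_pos hl]
    have step1 : ‖∫ t in Ioi (0:ℝ), Real.exp (-(δ^k) * t) • v t‖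
        ≤ ∫ t in Ioi (0:ℝ), Real.exp (-(δ^k) * t) * ‖v t‖ := by
      refine le_trans (norm_integral_le_integral_norm _) (le_of_eq ?_)
      refine integral_congr_ae (ae_of_all _ fun t => ?_)
      simp only [norm_smul, Real.norm_eq_abs, Real.abs_exp]
    have hnn : (0:ℝ) ≤ δ ^ ((k:ℝ)/2) := Real.rpow_nonneg hδ0.le _
    have step2 : δ ^ ((k:ℝ)/2) * (δ^k * ‖∫ t in Ioi (0:ℝ), Real.exp (-(δ^k) * t) • v t‖)
        ≤ δ ^ ((k:ℝ)/2) * (δ^k * ∫ t in Ioi (0:ℝ), Real.exp (-(δ^k) * t) * ‖v t‖) :=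
      mul_le_mul_of_nonneg_left (mul_le_mul_of_nonneg_left step1 hl.le) hnn
    refine le_trans step2 (le_of_eq ?_)
    rw [show δ ^ ((k:ℝ)/2) * (δ^k * ∫ t in Ioi (0:ℝ), Real.exp (-(δ^k) * t) * ‖v t‖)
        = (δ ^ ((k:ℝ)/2) * δ^k) * ∫ t in Ioi (0:ℝ), Real.exp (-(δ^k) * t) * ‖v t‖ from by ring,
      ← integral_const_mul]
    refine setIntegral_congr_fun measurableSet_Ioi (fun t ht => ?_)
    have ht' : (0:ℝ) < t := ht
    have key_id : (δ^k * t) ^ ((3:ℝ)/2) * t ^ (-(3:ℝ)/2) = δ ^ ((k:ℝ)/2) * δ^k := by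
      rw [Real.mul_rpow hl.le ht'.le]
      have h1 : t ^ ((3:ℝ)/2) * t ^ (-(3:ℝ)/2) = 1 := by
        rw [← Real.rpow_add ht']; norm_num
      have h2 : (δ^k : ℝ) ^ ((3:ℝ)/2) = δ ^ ((k:ℝ)/2) * δ^k := by
        rw [← Real.rpow_natCast δ k, ← Real.rpow_mul hδ0.le, ← Real.rpow_add hδ0]
        congr 1; ring
      calc (δ^k : ℝ) ^ ((3:ℝ)/2) * t ^ ((3:ℝ)/2) * t ^ (-(3:ℝ)/2)
          = (δ^k : ℝ) ^ ((3:ℝ)/2) * (t ^ ((3:ℝ)/2) * t ^ (-(3:ℝ)/2)) := by ring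
      _ = (δ^k : ℝ) ^ ((3:ℝ)/2) := by rw [h1, mul_one]
      _ = δ ^ ((k:ℝ)/2) * δ^k := h2
    show (δ ^ ((k:ℝ)/2) * δ^k) * (Real.exp (-(δ^k) * t) * ‖v t‖)
        = (δ^k * t) ^ ((3:ℝ)/2) * Real.exp (-(δ^k * t)) * (t ^ (-(3:ℝ)/2) * ‖v t‖)
    rw [← key_id, neg_mul]
    ring
  -- partial sums bound
  have hpartial : ∀ n : ℕ, ∑ k ∈ Finset.range n, δ ^ ((k:ℝ)/2) * ‖u (δ^k)‖
      ≤ A' * ∫ t in Ioi (0:ℝ), t ^ (-(3:ℝ)/2) * ‖v t‖ := by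
    intro n
    calc ∑ k ∈ Finset.range n, δ ^ ((k:ℝ)/2) * ‖u (δ^k)‖
        ≤ ∑ k ∈ Finset.range n, ∫ t in Ioi (0:ℝ),
            (δ^k * t) ^ ((3:ℝ)/2) * Real.exp (-(δ^k * t)) * (t ^ (-(3:ℝ)/2) * ‖v t‖) :=
          Finset.sum_le_sum fun k _ => term_le k
    _ = ∫ t in Ioi (0:ℝ), ∑ k ∈ Finset.range n,
            (δ^k * t) ^ ((3:ℝ)/2) * Real.exp (-(δ^k * t)) * (t ^ (-(3:ℝ)/2) * ‖v t‖) :=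
          (integral_finset_sum _ (fun k _ => hFint k)).symm
    _ ≤ ∫ t in Ioi (0:ℝ), A' * (t ^ (-(3:ℝ)/2) * ‖v t‖) := by
          refine setIntegral_mono_on (integrable_finset_sum _ (fun k _ => hFint k))
            (hint.const_mul _) measurableSet_Ioi (fun t ht => ?_)
          have ht' : (0:ℝ) < t := ht
          have hkey := key hδ0 hδ1 ht' n
          calc ∑ k ∈ Finset.range n,
              (δ^k * t) ^ ((3:ℝ)/2) * Real.exp (-(δ^k * t)) * (t ^ (-(3:ℝ)/2) * ‖v t‖)
              = (∑ k ∈ Finset.range n,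
                  (δ^k * t) ^ ((3:ℝ)/2) * Real.exp (-(δ^k * t))) * (t ^ (-(3:ℝ)/2) * ‖v t‖) :=
                (Finset.sum_mul _ _ _).symm
          _ ≤ A' * (t ^ (-(3:ℝ)/2) * ‖v t‖) :=
                mul_le_mul_of_nonneg_right hkey (hGnn t ht)
    _ = A' * ∫ t in Ioi (0:ℝ), t ^ (-(3:ℝ)/2) * ‖v t‖ := integral_const_mul _ _
  have hterm_nn : ∀ k : ℕ, 0 ≤ δ ^ ((k:ℝ)/2) * ‖u (δ^k)‖ := fun k =>
    mul_nonneg (Real.rpow_nonneg hδ0.le _) (norm_nonneg _)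
  have hsummable := summable_of_sum_range_le hterm_nn hpartial
  refine ⟨hsummable, ?_⟩
  refine le_trans (Real.tsum_le_of_sum_range_le hterm_nn hpartial) ?_
  refine mul_le_mul_of_nonneg_right ?_ hInn
  rw [hA']
  have := const_le
  linarith
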